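/- Let f : {−1,1}^k → {0,1} be a Boolean function that is not identically zero with ε_0(f) + ρ(f)·k > 0, and let Ψ be an instance of Max-CSP(f). Then val_Ψ ≤ (B_λ(Ψ) + ρ(f)·k) / (ε_0(f) + ρ(f)·k), where λ = (f̂({1}),…,f̂({k})). -/

import Mathlib

/-- Encoding of {-1,1}: `true ↦ 1`, `false ↦ -1`. -/
def pm (b : Bool) : ℝ := if b then 1 else -1

/-- ρ(f) = 2^{-k}·Σ_x f(x). -/
noncomputable def rho (k : ℕ) (f : (Fin k → Bool) → ℝ) : ℝ :=
  (∑ x, f x) / 2 ^ k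

/-- The Chow parameter (degree-1 Fourier coefficient) f̂({i}) = 2^{-k}·Σ_x f(x)·x_i. -/
noncomputable def chow (k : ℕ) (f : (Fin k → Bool) → ℝ) (i : Fin k) : ℝ :=
  (∑ x, f x * pm (x i)) / 2 ^ k

/-- The value of an assignment `σ` on the Max-CSP(f) instance given by
constraints `(jj i, b i)` with weights `w i`. -/
noncomputable def valCSP (k n m : ℕ) (f : (Fin k → Bool) → ℝ)
    (jj : Fin m → Fin k → Fin n) (b : Fin m → Fin k → Bool) (w : Fin m → ℝ)
    (σ : Fin n → Bool) : ℝ :=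
  (1 / (∑ i, w i)) * ∑ i, w i * f (fun t => b i t == σ (jj i t))

/-- The λ-bias B_λ(Ψ) for λ the vector of Chow parameters of f:
Σ_ℓ |(1/W)·Σ_{i,t : j(i)_t = ℓ} λ_t·w_i·b(i)_t|. -/
noncomputable def biasB (k n m : ℕ) (f : (Fin k → Bool) → ℝ)
    (jj : Fin m → Fin k → Fin n) (b : Fin m → Fin k → Bool) (w : Fin m → ℝ) : ℝ :=
  ∑ ℓ : Fin n,
    |(1 / (∑ i, w i)) *
      ∑ i, ∑ t, (if jj i t = ℓ then chow k f t * w i * pm (b i t) else 0)|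

theorem stmt_15 (k n m : ℕ) (hk : 0 < k)
    (f : (Fin k → Bool) → ℝ) (hf01 : ∀ x, f x = 0 ∨ f x = 1)
    (hfne : ∃ x, f x = 1)
    (ε₀ : ℝ)
    (hε₀ : IsLeast {r : ℝ | ∃ x : Fin k → Bool, f x = 1 ∧
            r = ∑ i, chow k f i * pm (x i)} ε₀)
    (hpos : 0 < ε₀ + rho k f * k)
    (jj : Fin m → Fin k → Fin n) (hjj : ∀ i, Function.Injective (jj i))
    (b : Fin m → Fin k → Bool) (w : Fin m → ℝ) (hw : ∀ i, 0 ≤ w i)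
    (hW : 0 < ∑ i, w i) :
    ∀ σ : Fin n → Bool,
      valCSP k n m f jj b w σ
        ≤ (biasB k n m f jj b w + rho k f * k) / (ε₀ + rho k f * k) := by
  intro σ
  have hpmabs : ∀ c : Bool, |pm c| = 1 := by intro c; cases c <;> norm_num [pm]
  have hpmmul : ∀ a c : Bool, pm (a == c) = pm a * pm c := by
    intro a c; cases a <;> cases c <;> norm_num [pm]
  have h2k : (0:ℝ) < 2 ^ k := by positivity
  have hfnn : ∀ x, 0 ≤ f x := fun x => by rcases hf01 x with h | h <;> simp [h]
  set ρ := rho k f with hρ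
  set W := ∑ i, w i with hWdef
  have hρ0 : 0 ≤ ρ := by
    rw [hρ, rho]
    exact div_nonneg (Finset.sum_nonneg fun x _ => hfnn x) h2k.le
  have hchow : ∀ t, |chow k f t| ≤ ρ := by
    intro t
    rw [chow, hρ, rho, abs_div, abs_of_pos h2k]
    gcongr
    calc |∑ x, f x * pm (x t)| ≤ ∑ x, |f x * pm (x t)| :=
          Finset.abs_sum_le_sum_abs _ _
      _ = ∑ x, f x := by
          apply Finset.sum_congr rfl
          intro x _
          rw [abs_mul, hpmabs, mul_one, abs_of_nonneg (hfnn x)]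
  set ε := ε₀ + ρ * k with hεdef
  -- key per-constraint inequality
  have hkey : ∀ x : Fin k → Bool,
      ε * f x - ρ * k ≤ ∑ t, chow k f t * pm (x t) := by
    intro x
    rcases hf01 x with h | h
    · rw [h, mul_zero, zero_sub]
      have hterm : ∀ t ∈ Finset.univ, -ρ ≤ chow k f t * pm (x t) := by
        intro t _
        have habs : |chow k f t * pm (x t)| ≤ ρ := by
          rw [abs_mul, hpmabs, mul_one]; exact hchow t
        have := neg_abs_le (chow k f t * pm (x t))
        linarith
      calc -(ρ * k) = ∑ _t : Fin k, -ρ := by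
            simp [Finset.sum_const]; ring
        _ ≤ _ := Finset.sum_le_sum hterm
    · rw [h, mul_one]
      have hmem : (∑ i, chow k f i * pm (x i)) ∈
          {r : ℝ | ∃ x : Fin k → Bool, f x = 1 ∧
            r = ∑ i, chow k f i * pm (x i)} := ⟨x, h, rfl⟩
      have := hε₀.2 hmem
      rw [hεdef]; linarith
  have hWinv : (0:ℝ) ≤ 1 / W := by positivity
  set S := (1 / W) * ∑ i, w i * ∑ t, chow k f t * pm (b i t == σ (jj i t)) with hS
  -- lower bound on S
  have hlow : ε * valCSP k n m f jj b w σ - ρ * k ≤ S := by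
    have hsum : ∑ i, w i * (ε * f (fun t => b i t == σ (jj i t)) - ρ * k)
        ≤ ∑ i, w i * ∑ t, chow k f t * pm (b i t == σ (jj i t)) := by
      apply Finset.sum_le_sum
      intro i _
      exact mul_le_mul_of_nonneg_left (hkey _) (hw i)
    have heq : ∑ i, w i * (ε * f (fun t => b i t == σ (jj i t)) - ρ * k)
        = ε * (∑ i, w i * f (fun t => b i t == σ (jj i t))) - ρ * k * W := by
      have hterm : ∀ i ∈ Finset.univ, w i * (ε * f (fun t => b i t == σ (jj i t)) - ρ * k)
          = ε * (w i * f (fun t => b i t == σ (jj i t))) - ρ * k * w i := fun i _ => by ring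
      rw [Finset.sum_congr rfl hterm, Finset.sum_sub_distrib, ← Finset.mul_sum,
        ← Finset.mul_sum, hWdef]
    have hmul := mul_le_mul_of_nonneg_left (heq ▸ hsum) hWinv
    rw [hS, valCSP]
    have hWne : W ≠ 0 := ne_of_gt hW
    have : (1 / W) * (ε * (∑ i, w i * f (fun t => b i t == σ (jj i t))) - ρ * k * W)
        = ε * ((1 / W) * ∑ i, w i * f (fun t => b i t == σ (jj i t))) - ρ * k := by
      field_simp
    rw [this] at hmul
    exact hmul
  -- upper bound on S
  have hup : S ≤ biasB k n m f jj b w := by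
    have hSeq : S = ∑ ℓ : Fin n, pm (σ ℓ) *
        ((1 / W) * ∑ i, ∑ t,
          (if jj i t = ℓ then chow k f t * w i * pm (b i t) else 0)) := by
      rw [hS]
      have hrhs : ∀ ℓ : Fin n, pm (σ ℓ) *
          ((1 / W) * ∑ i, ∑ t,
            (if jj i t = ℓ then chow k f t * w i * pm (b i t) else 0))
          = (1 / W) * ∑ i, ∑ t,
            (if jj i t = ℓ then pm (σ ℓ) * (chow k f t * w i * pm (b i t)) else 0) := by
        intro ℓ
        rw [mul_left_comm]
        congr 1
        rw [Finset.mul_sum]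
        apply Finset.sum_congr rfl
        intro i _
        rw [Finset.mul_sum]
        apply Finset.sum_congr rfl
        intro t _
        split <;> simp
      simp only [hrhs]
      rw [← Finset.mul_sum]
      congr 1
      rw [Finset.sum_comm]
      apply Finset.sum_congr rfl
      intro i _
      rw [Finset.sum_comm]
      rw [Finset.mul_sum]
      apply Finset.sum_congr rfl
      intro t _
      rw [Finset.sum_ite_eq]
      simp only [Finset.mem_univ, if_true]
      rw [hpmmul]
      ring
    rw [hSeq, biasB, ← hWdef]
    apply Finset.sum_le_sum
    intro ℓ _
    calc pm (σ ℓ) * ((1 / W) * ∑ i, ∑ t,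
          (if jj i t = ℓ then chow k f t * w i * pm (b i t) else 0))
        ≤ |pm (σ ℓ) * ((1 / W) * ∑ i, ∑ t,
          (if jj i t = ℓ then chow k f t * w i * pm (b i t) else 0))| := le_abs_self _
      _ = |(1 / W) * ∑ i, ∑ t,
          (if jj i t = ℓ then chow k f t * w i * pm (b i t) else 0)| := by
          rw [abs_mul, hpmabs, one_mul]
  -- combine
  have hεpos : 0 < ε := hpos
  rw [le_div_iff₀ hεpos]
  have hc : valCSP k n m f jj b w σ * ε = ε * valCSP k n m f jj b w σ := mul_comm _ _
  rw [hc]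
  linarith
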